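/- Let I be a finite nonempty index set, X a real |I|×d matrix, and n ∈ ℝ^I. If n(i) > 0 for all i ∈ I, then the MLE exists: there is m̂ ∈ ℝ^I with m̂(i) > 0 for all i, log m̂ in the column space of X, and l(m̂) ≥ l(m) for every m ∈ ℝ^I with m(i) > 0 for all i and log m in the column space of X. -/

import Mathlib

open Real Filter

/-- pointwise coercivity bound: for a>0, a*t - exp t ≤ -(min a 1)*|t| + (a+1)*log(a+1) -/
lemma key_bound (a t : ℝ) (ha : 0 < a) :
    a * t - Real.exp t ≤ -(min a 1) * |t| + (a + 1) * Real.log (a + 1) := by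
  have hC : 0 ≤ (a + 1) * Real.log (a + 1) := by
    have := Real.log_nonneg (by linarith : (1:ℝ) ≤ a + 1)
    positivity
  rcases le_or_gt 0 t with ht | ht
  · have h1 : (a + 1) * (t - Real.log (a + 1) + 1) ≤ Real.exp t := by
      have h2 := Real.add_one_le_exp (t - Real.log (a + 1))
      have h3 : Real.exp (t - Real.log (a + 1)) = Real.exp t / (a + 1) := by
        rw [Real.exp_sub, Real.exp_log (by linarith)]
      rw [h3] at h2
      have := (mul_le_mul_of_nonneg_left h2 (by linarith : (0:ℝ) ≤ a + 1))
      calc (a+1) * (t - Real.log (a+1) + 1) = (a+1) * (t - Real.log (a+1) + 1) := rfl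
        _ ≤ (a+1) * (Real.exp t / (a+1)) := this
        _ = Real.exp t := by field_simp
    have habs : |t| = t := abs_of_nonneg ht
    have hmin : min a 1 ≤ 1 := min_le_right _ _
    nlinarith [mul_le_mul_of_nonneg_right hmin ht]
  · have habs : |t| = -t := abs_of_neg ht
    have hmin : min a 1 ≤ a := min_le_left _ _
    have he : 0 < Real.exp t := Real.exp_pos t
    nlinarith [mul_le_mul_of_nonneg_right hmin (by linarith : 0 ≤ -t)]

/-- If all cell counts are positive, the MLE exists (Corollary 2.3). -/
theorem mle_exists_of_pos {I : Type*} [Fintype I] [Nonempty I] {d : ℕ}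
    (X : Matrix I (Fin d) ℝ) (n : I → ℝ) (hn : ∀ i, 0 < n i) :
    ∃ mhat : I → ℝ, (∀ i, 0 < mhat i) ∧
      (∃ θ : Fin d → ℝ, (fun i => Real.log (mhat i)) = X.mulVec θ) ∧
      (∀ m : I → ℝ, (∀ i, 0 < m i) →
        (∃ θ : Fin d → ℝ, (fun i => Real.log (m i)) = X.mulVec θ) →
        (∑ i, n i * Real.log (m i) - ∑ i, m i) ≤
          (∑ i, n i * Real.log (mhat i) - ∑ i, mhat i)) := by
  classical
  set S : Submodule ℝ (I → ℝ) := LinearMap.range X.mulVecLin with hS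
  have hSclosed : IsClosed (S : Set (I → ℝ)) := Submodule.closed_of_finiteDimensional S
  set F : (I → ℝ) → ℝ := fun v => ∑ i, n i * v i - ∑ i, Real.exp (v i) with hF
  have hFcont : Continuous F := by
    apply Continuous.sub <;> apply continuous_finset_sum <;> intro i _ <;> fun_prop
  -- constants
  set c : ℝ := Finset.univ.inf' Finset.univ_nonempty (fun i => min (n i) 1) with hc
  have hcpos : 0 < c := by
    rw [hc, Finset.lt_inf'_iff]
    intro i _
    exact lt_min (hn i) one_pos
  set CC : ℝ := ∑ i, (n i + 1) * Real.log (n i + 1) with hCC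
  -- coercivity: F v ≤ CC - c * ‖v‖
  have hcoer : ∀ v : I → ℝ, F v ≤ CC - c * ‖v‖ := by
    intro v
    obtain ⟨i₀, -, hi₀⟩ := Finset.exists_mem_eq_sup' (Finset.univ_nonempty (α := I))
      (fun i => |v i|)
    have hnorm : ‖v‖ ≤ |v i₀| := by
      rw [← hi₀]
      refine (pi_norm_le_iff_of_nonneg ?_).2 fun i => ?_
      · exact le_trans (abs_nonneg (v i₀))
          (le_of_eq hi₀.symm)
      · rw [Real.norm_eq_abs]
        exact Finset.le_sup' (fun i => |v i|) (Finset.mem_univ i)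
    have hsum : F v ≤ ∑ i, (-(min (n i) 1) * |v i| + (n i + 1) * Real.log (n i + 1)) := by
      show ∑ i, n i * v i - ∑ i, Real.exp (v i) ≤ _
      rw [← Finset.sum_sub_distrib]
      exact Finset.sum_le_sum fun i _ => key_bound (n i) (v i) (hn i)
    have hdrop : ∑ i, (-(min (n i) 1) * |v i|) ≤ -(c * |v i₀|) := by
      have h1 : ∀ i ∈ Finset.univ, i ≠ i₀ → -(min (n i) 1) * |v i| ≤ 0 := by
        intro i _ _
        have : 0 ≤ min (n i) 1 := le_of_lt (lt_min (hn i) one_pos)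
        have := abs_nonneg (v i)
        nlinarith
      have h2 : -(min (n i₀) 1) * |v i₀| ≤ -(c * |v i₀|) := by
        have hle : c ≤ min (n i₀) 1 := Finset.inf'_le _ (Finset.mem_univ i₀)
        have := abs_nonneg (v i₀)
        nlinarith
      calc ∑ i, (-(min (n i) 1) * |v i|)
          = -(min (n i₀) 1) * |v i₀| + ∑ i ∈ Finset.univ.erase i₀, (-(min (n i) 1) * |v i|) := by
            rw [← Finset.add_sum_erase _ _ (Finset.mem_univ i₀)]
        _ ≤ -(min (n i₀) 1) * |v i₀| + 0 :=
            add_le_add_right (Finset.sum_nonpos fun i hi =>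
                h1 i (Finset.mem_univ i) (Finset.ne_of_mem_erase hi)) _
        _ ≤ -(c * |v i₀|) := by linarith
    have : F v ≤ -(c * |v i₀|) + CC := by
      rw [Finset.sum_add_distrib] at hsum
      rw [hCC]; linarith
    have : c * ‖v‖ ≤ c * |v i₀| := mul_le_mul_of_nonneg_left hnorm hcpos.le
    linarith
  -- F tends to atBot along cocompact
  have hbot : Tendsto F (cocompact (I → ℝ)) atBot := by
    apply tendsto_atBot_mono hcoer
    have h1 : Tendsto (fun v : I → ℝ => ‖v‖) (cocompact _) atTop :=
      tendsto_norm_cocompact_atTop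
    have h2 : Tendsto (fun v : I → ℝ => CC - c * ‖v‖) (cocompact _) atBot := by
      apply tendsto_atBot_add_const_left
      exact (tendsto_neg_atBot_iff.mpr (h1.const_mul_atTop hcpos))
    simpa using h2
  -- maximize F on S
  have h0S : (0 : I → ℝ) ∈ (S : Set (I → ℝ)) := S.zero_mem
  obtain ⟨vhat, hvS, hvmax⟩ := hFcont.continuousOn.exists_isMaxOn' hSclosed h0S
    ((hbot.eventually (eventually_le_atBot (F 0))).filter_mono inf_le_left)
  refine ⟨fun i => Real.exp (vhat i), fun i => Real.exp_pos _, ?_, ?_⟩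
  · obtain ⟨θ, hθ⟩ := hvS
    exact ⟨θ, by funext i; rw [Real.log_exp]; exact congrFun hθ.symm i⟩
  · intro m hm ⟨θ, hθ⟩
    have hmS : (fun i => Real.log (m i)) ∈ (S : Set (I → ℝ)) := ⟨θ, hθ.symm⟩
    have := hvmax hmS
    simp only [hF, Set.mem_setOf_eq] at this
    have hexp : ∀ i, Real.exp (Real.log (m i)) = m i := fun i => Real.exp_log (hm i)
    simp only [hexp, Real.log_exp] at this ⊢
    exact this
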